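/- For partial 1-cocycles f, g with values in S, the R-linear map ψ : Q_f ⊗_R Q_g → Q_{fg} defined by a ⊗ b ↦ ab is an isomorphism of R-modules. -/

import Mathlib

/-- A unital partial action of a group `G` on a commutative ring `S`.
The unital ideal `S_g` is `S * e g` where `e g` is a central idempotent,
and `act g` is the partial isomorphism `α_g` (extended to all of `S` by
first multiplying by the identity `e g⁻¹` of its domain ideal). -/
structure PartialAction (G : Type*) [Group G] (S : Type*) [CommRing S] where
  e : G → S
  act : G → S → S
  e_idem : ∀ g, e g * e g = e g
  e_one : e 1 = 1
  act_one : ∀ x, act 1 x = x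
  act_add : ∀ g x y, act g (x + y) = act g x + act g y
  act_mul : ∀ g x y, act g (x * y) = act g x * act g y
  act_restrict : ∀ g x, act g (x * e g⁻¹) = act g x
  act_mem : ∀ g x, act g x * e g = act g x
  act_e : ∀ g, act g (e g⁻¹) = e g
  act_inter : ∀ g h, act g (e g⁻¹ * e h) = e g * e (g * h)
  act_comp : ∀ g h x, act g (act h x * e g⁻¹) = act (g * h) (x * e h⁻¹) * e g
  act_inv : ∀ g x, act g⁻¹ (act g (x * e g⁻¹)) = x * e g⁻¹

namespace PartialAction

variable {G : Type*} [Group G] {S : Type*} [CommRing S] (P : PartialAction G S)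

/-- The subring of subinvariants `S^α`. -/
def invariants : Set S := {a | ∀ g : G, P.act g (a * P.e g⁻¹) = a * P.e g}

/-- `S ⊇ R` is a partial Galois extension: `R = S^α` and there is a
partial Galois coordinate system. -/
def IsPartialGalois [Fintype G] [DecidableEq G] (R : Subring S) : Prop :=
  ((R : Set S) = P.invariants) ∧
    ∃ m : ℕ, ∃ x y : Fin m → S, ∀ g : G,
      (∑ i : Fin m, x i * P.act g (y i * P.e g⁻¹)) = if g = 1 then 1 else 0

/-- A partial 1-cocycle with values in `S`: `f g` is invertible in the
unital ideal `S e g` with inverse `finv g`, and the cocycle identity holds. -/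
structure Cocycle where
  f : G → S
  finv : G → S
  f_mem : ∀ g, f g * P.e g = f g
  finv_mem : ∀ g, finv g * P.e g = finv g
  f_mul_finv : ∀ g, f g * finv g = P.e g
  cocycle : ∀ g h, f (g * h) * P.e g = f g * P.act g (f h * P.e g⁻¹)

variable {P}

theorem act_zero (g : G) : P.act g 0 = 0 := by
  have := P.act_add g 0 0
  simpa using this.symm

/-- The set `Q_f = {a ∈ S : α_g(a 1_{g⁻¹}) = f(g) a for all g}` attached to a map `f : G → S`. -/
def Qset (P : PartialAction G S) (f : G → S) : Set S :=
  {a | ∀ g : G, P.act g (a * P.e g⁻¹) = f g * a}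

/-- `Q_f` as an `R`-submodule of `S`, where `R` is a subring of invariants. -/
def Qmod (P : PartialAction G S) (R : Subring S)
    (hR : ∀ r ∈ R, ∀ g : G, P.act g (r * P.e g⁻¹) = r * P.e g)
    (f : G → S) : Submodule R S where
  carrier := Qset P f
  zero_mem' := by
    intro g
    simp [Qset, act_zero]
  add_mem' := by
    intro a b ha hb g
    have := P.act_add g (a * P.e g⁻¹) (b * P.e g⁻¹)
    rw [Qset] at *
    rw [add_mul, this, ha g, hb g, mul_add]
  smul_mem' := by
    intro c x hx g
    have hc : (c : S) ∈ (R : Set S) := c.2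
    have hcx : c • x = (c : S) * x := Subring.smul_def c x
    have hx' : ∀ g : G, P.act g (x * P.e g⁻¹) = f g * x := hx
    rw [hcx]
    have h1 : P.act g ((c : S) * x * P.e g⁻¹) = P.act g ((c : S)) * P.act g x := by
      rw [P.act_restrict, P.act_mul]
    have h2 : P.act g ((c : S)) = (c : S) * P.e g := by
      rw [← P.act_restrict g (c : S), hR c c.2 g]
    have h3 : P.act g x = f g * x := by
      rw [← P.act_restrict g x]; exact hx' g
    have h4 : (f g * x) * P.e g = f g * x := by
      have := P.act_mem g (x * P.e g⁻¹)
      rw [P.act_restrict, h3] at this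
      exact this
    rw [h1, h2, h3]
    have h5 : (c : S) * P.e g * (f g * x) = (c : S) * (f g * x * P.e g) := by ring
    rw [h5, h4]
    ring

section Aux

lemma act_sum {ι : Type*} (s : Finset ι) (g : G) (f : ι → S) :
    P.act g (∑ i ∈ s, f i) = ∑ i ∈ s, P.act g (f i) := by
  classical
  induction s using Finset.induction with
  | empty => simpa using act_zero g
  | insert _ _ hi ih => rw [Finset.sum_insert hi, Finset.sum_insert hi, P.act_add, ih]

lemma act_mul₂ (g : G) (a b : S) :
    P.act g (a * b * P.e g⁻¹) = P.act g (a * P.e g⁻¹) * P.act g (b * P.e g⁻¹) := by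
  rw [← P.act_mul]
  congr 1
  have h : a * P.e g⁻¹ * (b * P.e g⁻¹) = a * b * (P.e g⁻¹ * P.e g⁻¹) := by ring
  rw [h, P.e_idem]

lemma act_comp' (g h : G) (x : S) :
    P.act g (P.act h (x * P.e h⁻¹) * P.e g⁻¹) = P.act (g * h) (x * P.e h⁻¹) * P.e g := by
  rw [P.act_comp]
  congr 2
  rw [mul_assoc, P.e_idem]

lemma act_shift (k g : G) (x : S) :
    P.act k (x * P.e (k⁻¹ * g)) = P.act k (x * P.e k⁻¹) * P.e g := by
  have h1 : P.act k (x * P.e (k⁻¹ * g)) = P.act k (x * P.e (k⁻¹ * g) * P.e k⁻¹) :=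
    (P.act_restrict k _).symm
  have h2 : x * P.e (k⁻¹ * g) * P.e k⁻¹ = x * (P.e (k⁻¹ * g) * P.e k⁻¹) := by ring
  have h3 : P.act k (x * (P.e (k⁻¹ * g) * P.e k⁻¹))
      = P.act k x * P.act k (P.e k⁻¹ * P.e (k⁻¹ * g)) := by
    rw [P.act_mul]; ring_nf
  rw [h1, h2, h3, P.act_inter, mul_inv_cancel_left]
  have h4 : P.act k x * (P.e k * P.e g) = (P.act k x * P.e k) * P.e g := by ring
  rw [h4, P.act_mem, ← P.act_restrict k x]

/-- inverse cocycle values transform by `α_g(f⁻¹(h) 1_{g⁻¹}) = f(g) f⁻¹(gh) 1_g`. -/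
lemma act_finv (c : P.Cocycle) (g h : G) :
    P.act g (c.finv h * P.e g⁻¹) = c.f g * c.finv (g * h) * P.e g := by
  set A := P.act g (c.f h * P.e g⁻¹) with hA
  set B := P.act g (c.finv h * P.e g⁻¹) with hB
  have h1 : A * B = P.e g * P.e (g * h) := by
    rw [hA, hB, ← act_mul₂, ← P.act_inter g h]
    congr 1
    rw [c.f_mul_finv]; ring
  have h2 : c.f g * c.finv (g * h) * A = P.e (g * h) * P.e g := by
    have hc := c.cocycle g h
    have : c.finv (g * h) * (c.f (g * h) * P.e g) = c.finv (g * h) * (c.f g * A) := by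
      rw [hc]
    calc c.f g * c.finv (g * h) * A = c.finv (g * h) * (c.f g * A) := by ring
      _ = c.finv (g * h) * (c.f (g * h) * P.e g) := this.symm
      _ = c.f (g * h) * c.finv (g * h) * P.e g := by ring
      _ = P.e (g * h) * P.e g := by rw [c.f_mul_finv]
  have h3 : B * (P.e g * P.e (g * h)) = B := by
    rw [← P.act_inter g h, hB]
    have : c.finv h * P.e g⁻¹ * (P.e g⁻¹ * P.e h) = c.finv h * P.e h * (P.e g⁻¹ * P.e g⁻¹) := by
      ring
    rw [← P.act_mul, this, P.e_idem, c.finv_mem]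
  calc B = B * (P.e g * P.e (g * h)) := h3.symm
    _ = B * (c.f g * c.finv (g * h) * A) := by rw [h2]; ring
    _ = c.f g * c.finv (g * h) * (A * B) := by ring
    _ = c.f g * c.finv (g * h) * (P.e g * P.e (g * h)) := by rw [h1]
    _ = c.f g * (c.finv (g * h) * P.e (g * h)) * P.e g := by ring
    _ = c.f g * c.finv (g * h) * P.e g := by rw [c.finv_mem]

/-- The inverse of a partial cocycle is a partial cocycle. -/
def cocInv (c : P.Cocycle) : P.Cocycle where
  f := c.finv
  finv := c.f
  f_mem := c.finv_mem
  finv_mem := c.f_mem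
  f_mul_finv := fun g => by rw [mul_comm]; exact c.f_mul_finv g
  cocycle := fun g h => by
    rw [act_finv c g h]
    exact Eq.symm <| calc c.finv g * (c.f g * c.finv (g * h) * P.e g)
        = (c.f g * c.finv g) * (c.finv (g * h) * P.e g) := by ring
      _ = c.finv (g * h) * (P.e g * P.e g) := by rw [c.f_mul_finv]; ring
      _ = c.finv (g * h) * P.e g := by rw [P.e_idem]

end Aux
section Aux2

variable [Fintype G] [DecidableEq G]

/-- The twisted trace `τ_c(s) = ∑_h f⁻¹(h) α_h(s 1_{h⁻¹})`. -/
def tw (c : P.Cocycle) (s : S) : S := ∑ h : G, c.finv h * P.act h (s * P.e h⁻¹)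

/-- The partial trace `t(s) = ∑_g α_g(s 1_{g⁻¹})`. -/
def tr (P : PartialAction G S) (s : S) : S := ∑ g : G, P.act g (s * P.e g⁻¹)

lemma tw_mem (c : P.Cocycle) (s : S) : tw c s ∈ Qset P c.f := by
  intro g
  show P.act g (tw c s * P.e g⁻¹) = c.f g * tw c s
  have step1 : P.act g (tw c s * P.e g⁻¹)
      = ∑ h : G, P.act g (c.finv h * P.e g⁻¹) *
          P.act g (P.act h (s * P.e h⁻¹) * P.e g⁻¹) := by
    rw [tw, Finset.sum_mul, act_sum]
    exact Finset.sum_congr rfl fun h _ => act_mul₂ g _ _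
  have step2 : ∀ h : G, P.act g (c.finv h * P.e g⁻¹) *
        P.act g (P.act h (s * P.e h⁻¹) * P.e g⁻¹)
      = c.f g * (c.finv (g * h) * P.act (g * h) (s * P.e (g * h)⁻¹)) * P.e g := by
    intro h
    rw [act_finv c g h, act_comp']
    have hh : P.act (g * h) (s * P.e h⁻¹) = P.act (g * h) (s * P.e (g * h)⁻¹) * P.e g := by
      have h2 : (h : G)⁻¹ = (g * h)⁻¹ * g := by group
      rw [h2, act_shift]
    rw [hh]
    have hE := P.e_idem g
    set E := P.e g
    set A := P.act (g * h) (s * P.e (g * h)⁻¹)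
    calc c.f g * c.finv (g * h) * E * (A * E * E)
        = c.f g * (c.finv (g * h) * A) * (E * (E * E)) := by ring
      _ = c.f g * (c.finv (g * h) * A) * E := by rw [hE, hE]
  have step3 : (∑ h : G, c.f g * (c.finv (g * h) * P.act (g * h) (s * P.e (g * h)⁻¹)) * P.e g)
      = ∑ k : G, c.f g * (c.finv k * P.act k (s * P.e k⁻¹)) * P.e g :=
    Fintype.sum_equiv (Equiv.mulLeft g) _ _ (fun h => by simp [Equiv.mulLeft])
  rw [step1, Finset.sum_congr rfl fun h _ => step2 h, step3]
  calc (∑ k : G, c.f g * (c.finv k * P.act k (s * P.e k⁻¹)) * P.e g)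
      = ∑ k : G, (c.f g * P.e g) * (c.finv k * P.act k (s * P.e k⁻¹)) := by
        exact Finset.sum_congr rfl fun k _ => by ring
    _ = (c.f g * P.e g) * ∑ k : G, c.finv k * P.act k (s * P.e k⁻¹) := by
        rw [Finset.mul_sum]
    _ = c.f g * tw c s := by rw [c.f_mem, tw]

lemma tr_mem (s : S) : tr P s ∈ P.invariants := by
  intro g
  show P.act g (tr P s * P.e g⁻¹) = tr P s * P.e g
  have step1 : P.act g (tr P s * P.e g⁻¹)
      = ∑ h : G, P.act (g * h) (s * P.e h⁻¹) * P.e g := by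
    rw [tr, Finset.sum_mul, act_sum]
    exact Finset.sum_congr rfl fun h _ => act_comp' g h s
  have step2 : ∀ h : G, P.act (g * h) (s * P.e h⁻¹) * P.e g
      = P.act (g * h) (s * P.e (g * h)⁻¹) * P.e g := by
    intro h
    have h2 : (h : G)⁻¹ = (g * h)⁻¹ * g := by group
    rw [h2, act_shift]
    have hE := P.e_idem g
    set E := P.e g
    calc P.act (g * h) (s * P.e (g * h)⁻¹) * E * E
        = P.act (g * h) (s * P.e (g * h)⁻¹) * (E * E) := by ring
      _ = _ := by rw [hE]
  have step3 : (∑ h : G, P.act (g * h) (s * P.e (g * h)⁻¹) * P.e g)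
      = ∑ k : G, P.act k (s * P.e k⁻¹) * P.e g :=
    Fintype.sum_equiv (Equiv.mulLeft g) _ _ (fun h => by simp [Equiv.mulLeft])
  rw [step1, Finset.sum_congr rfl fun h _ => step2 h, step3, ← Finset.sum_mul, tr]

lemma tr_smul {r : S} (hr : ∀ g : G, P.act g (r * P.e g⁻¹) = r * P.e g) (s : S) :
    tr P (r * s) = r * tr P s := by
  rw [tr, tr, Finset.mul_sum]
  refine Finset.sum_congr rfl fun g _ => ?_
  rw [act_mul₂, hr g]
  calc r * P.e g * P.act g (s * P.e g⁻¹) = r * (P.act g (s * P.e g⁻¹) * P.e g) := by ring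
    _ = r * P.act g (s * P.e g⁻¹) := by rw [P.act_mem]

lemma Qset_mul {f1 f2 : G → S} {a b : S} (ha : a ∈ Qset P f1) (hb : b ∈ Qset P f2) :
    a * b ∈ Qset P (fun h => f1 h * f2 h) := by
  intro g
  show P.act g (a * b * P.e g⁻¹) = f1 g * f2 g * (a * b)
  rw [act_mul₂, ha g, hb g]
  ring

end Aux2
section Galois

variable [Fintype G] [DecidableEq G]

lemma tr_add (s t : S) : tr P (s + t) = tr P s + tr P t := by
  rw [tr, tr, tr, ← Finset.sum_add_distrib]
  refine Finset.sum_congr rfl fun g _ => ?_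
  rw [add_mul, P.act_add]

variable {m : ℕ} {x y : Fin m → S}
  (hxy : ∀ g : G, (∑ i : Fin m, x i * P.act g (y i * P.e g⁻¹)) = if g = 1 then 1 else 0)

include hxy

/-- The dual form of the partial Galois coordinate relation. -/
lemma dual (g : G) :
    (∑ i : Fin m, P.act g (x i * P.e g⁻¹) * y i) = if g = 1 then 1 else 0 := by
  have happ := congrArg (fun z => P.act g (z * P.e g⁻¹)) (hxy g⁻¹)
  simp only [inv_inv] at happ
  have lhs : P.act g ((∑ i : Fin m, x i * P.act g⁻¹ (y i * P.e g)) * P.e g⁻¹)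
      = ∑ i : Fin m, P.act g (x i * P.e g⁻¹) * y i := by
    rw [Finset.sum_mul, act_sum]
    refine Finset.sum_congr rfl fun i _ => ?_
    rw [act_mul₂ g (x i) (P.act g⁻¹ (y i * P.e g)), P.act_mem g⁻¹ (y i * P.e g)]
    have hinv : P.act g (P.act g⁻¹ (y i * P.e g)) = y i * P.e g := by
      have h := P.act_inv g⁻¹ (y i); rwa [inv_inv] at h
    rw [hinv]
    calc P.act g (x i * P.e g⁻¹) * (y i * P.e g)
        = P.act g (x i * P.e g⁻¹) * P.e g * y i := by ring
      _ = P.act g (x i * P.e g⁻¹) * y i := by rw [P.act_mem]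
  have rhs : P.act g ((if g⁻¹ = 1 then (1:S) else 0) * P.e g⁻¹)
      = if g = 1 then 1 else 0 := by
    by_cases hg : g = 1
    · subst hg
      simp [P.e_one, P.act_one]
    · have : g⁻¹ ≠ 1 := fun h => hg (by simpa using congrArg Inv.inv h)
      simp [hg, this, act_zero]
  rw [lhs, rhs] at happ
  exact happ

/-- Projection formula: `s = ∑_i t(s x_i) y_i`. -/
lemma proj (s : S) : (∑ i : Fin m, tr P (s * x i) * y i) = s := by
  have key : ∀ g : G, (∑ i : Fin m, P.act g (s * x i * P.e g⁻¹) * y i)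
      = P.act g (s * P.e g⁻¹) * (if g = 1 then 1 else 0) := by
    intro g
    rw [← dual hxy g, Finset.mul_sum]
    refine Finset.sum_congr rfl fun i _ => ?_
    rw [act_mul₂]; ring
  calc (∑ i : Fin m, tr P (s * x i) * y i)
      = ∑ i : Fin m, ∑ g : G, P.act g (s * x i * P.e g⁻¹) * y i := by
        refine Finset.sum_congr rfl fun i _ => ?_
        rw [tr, Finset.sum_mul]
    _ = ∑ g : G, ∑ i : Fin m, P.act g (s * x i * P.e g⁻¹) * y i := Finset.sum_comm
    _ = ∑ g : G, P.act g (s * P.e g⁻¹) * (if g = 1 then 1 else 0) := by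
        exact Finset.sum_congr rfl fun g _ => key g
    _ = P.act 1 (s * P.e 1⁻¹) := by
        simp only [mul_ite, mul_one, mul_zero]
        rw [Finset.sum_ite_eq' Finset.univ (1 : G) (fun g => P.act g (s * P.e g⁻¹))]
        simp
    _ = s := by rw [inv_one, P.e_one, mul_one, P.act_one]

lemma sum_x_tr_y : (∑ i : Fin m, x i * tr P (y i)) = 1 := by
  calc (∑ i : Fin m, x i * tr P (y i))
      = ∑ i : Fin m, ∑ g : G, x i * P.act g (y i * P.e g⁻¹) := by
        refine Finset.sum_congr rfl fun i _ => ?_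
        rw [tr, Finset.mul_sum]
    _ = ∑ g : G, ∑ i : Fin m, x i * P.act g (y i * P.e g⁻¹) := Finset.sum_comm
    _ = ∑ g : G, if g = 1 then (1:S) else 0 := Finset.sum_congr rfl fun g _ => hxy g
    _ = 1 := by simp

/-- Surjectivity of the partial trace map, via Nakayama. -/
lemma exists_tr_one (R : Subring S)
    (hR : ∀ r ∈ R, ∀ g : G, P.act g ((r:S) * P.e g⁻¹) = r * P.e g)
    (hRinv : (R : Set S) = P.invariants) :
    ∃ u : S, tr P u = 1 := by
  classical
  have trR_mem : ∀ s : S, tr P s ∈ R := fun s => by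
    rw [← SetLike.mem_coe, hRinv]; exact tr_mem s
  let trR : S →ₗ[R] R :=
    { toFun := fun s => ⟨tr P s, trR_mem s⟩
      map_add' := fun s t => Subtype.ext (tr_add s t)
      map_smul' := fun r s => Subtype.ext (by
        show tr P (r • s) = (r : S) * tr P s
        rw [Subring.smul_def]
        exact tr_smul (hR r r.2) s) }
  have hFG : (⊤ : Submodule R S).FG := by
    refine ⟨Finset.image y Finset.univ, ?_⟩
    refine le_antisymm le_top ?_
    intro s _
    have hs : s = ∑ i : Fin m, (trR (s * x i)) • y i := by
      rw [show (∑ i : Fin m, (trR (s * x i)) • y i)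
          = ∑ i : Fin m, tr P (s * x i) * y i from
        Finset.sum_congr rfl fun i _ => Subring.smul_def _ _]
      exact (proj hxy s).symm
    rw [hs]
    exact Submodule.sum_mem _ fun i _ => Submodule.smul_mem _ _
      (Submodule.subset_span (by simp [Finset.mem_coe]))
  set I : Ideal R := LinearMap.range trR with hI
  have hle : (⊤ : Submodule R S) ≤ I • (⊤ : Submodule R S) := by
    intro s _
    have hs : s = ∑ i : Fin m, (trR (y i)) • (s * x i) := by
      rw [show (∑ i : Fin m, (trR (y i)) • (s * x i))
          = ∑ i : Fin m, tr P (y i) * (s * x i) from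
        Finset.sum_congr rfl fun i _ => Subring.smul_def _ _]
      have h1 : (∑ i : Fin m, tr P (y i) * (s * x i))
          = s * ∑ i : Fin m, x i * tr P (y i) := by
        rw [Finset.mul_sum]; exact Finset.sum_congr rfl fun i _ => by ring
      rw [h1, sum_x_tr_y hxy, mul_one]
    rw [hs]
    exact Submodule.sum_mem _ fun i _ =>
      Submodule.smul_mem_smul (LinearMap.mem_range_self trR (y i)) trivial
  obtain ⟨r, hr1, hr0⟩ :=
    Submodule.exists_sub_one_mem_and_smul_eq_zero_of_fg_of_le_smul I ⊤ hFG hle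
  have h0 : r • (1 : S) = 0 := hr0 1 trivial
  have h0' : (r : S) = 0 := by
    rw [Subring.smul_def, smul_eq_mul, mul_one] at h0; exact h0
  have hr : r = 0 := Subtype.ext h0'
  rw [hr, zero_sub] at hr1
  have h1 : (1 : R) ∈ I := by simpa using I.neg_mem hr1
  obtain ⟨u, hu⟩ := h1
  exact ⟨u, congrArg Subtype.val hu⟩

end Galois
section Key

variable [Fintype G] [DecidableEq G]

lemma act_transfer (g h : G) (z : S) :
    P.act g (P.act (g⁻¹ * h) (z * P.e h⁻¹) * P.e g⁻¹) = P.act h (z * P.e h⁻¹) * P.e g := by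
  rw [P.act_comp]
  have h1 : g * (g⁻¹ * h) = h := by group
  have h2 : (g⁻¹ * h)⁻¹ = h⁻¹ * g := by group
  rw [h1, h2, act_shift h g (z * P.e h⁻¹), mul_assoc z (P.e h⁻¹) (P.e h⁻¹), P.e_idem,
    mul_assoc, P.e_idem]

variable {m : ℕ} {x y : Fin m → S}
  (hxy : ∀ g : G, (∑ i : Fin m, x i * P.act g (y i * P.e g⁻¹)) = if g = 1 then 1 else 0)

include hxy

lemma inner_sum (g h : G) (u : S) :
    (∑ i : Fin m, P.act g (x i * P.e g⁻¹) * P.act h (y i * u * P.e h⁻¹)) * P.e g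
      = if h = g then P.act g (u * P.e g⁻¹) else 0 := by
  set w : G := g⁻¹ * h with hw
  set B : S := P.act w (u * P.e w⁻¹) * (P.e w * P.e g⁻¹) with hB
  have hA : ∀ i : Fin m,
      P.act w (y i * u * P.e h⁻¹) = P.act w (y i * P.e w⁻¹) * B := by
    intro i
    have harg : y i * u * P.e h⁻¹ * P.e w⁻¹
        = (y i * P.e w⁻¹) * ((u * P.e w⁻¹) * (P.e w⁻¹ * P.e h⁻¹)) := by
      have hE := P.e_idem w⁻¹
      calc y i * u * P.e h⁻¹ * P.e w⁻¹
          = y i * u * P.e h⁻¹ * (P.e w⁻¹ * (P.e w⁻¹ * P.e w⁻¹)) := by rw [hE, hE]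
        _ = (y i * P.e w⁻¹) * ((u * P.e w⁻¹) * (P.e w⁻¹ * P.e h⁻¹)) := by ring
    have hwh : w * h⁻¹ = g⁻¹ := by rw [hw]; group
    rw [← P.act_restrict w (y i * u * P.e h⁻¹), harg,
      P.act_mul w (y i * P.e w⁻¹) (u * P.e w⁻¹ * (P.e w⁻¹ * P.e h⁻¹)),
      P.act_mul w (u * P.e w⁻¹) (P.e w⁻¹ * P.e h⁻¹),
      P.act_inter w h⁻¹, hwh, hB]
  have hterm : ∀ i : Fin m,
      P.act g (x i * P.e g⁻¹) * P.act h (y i * u * P.e h⁻¹) * P.e g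
        = P.act g (x i * P.act w (y i * u * P.e h⁻¹) * P.e g⁻¹) := by
    intro i
    rw [mul_assoc, ← act_transfer g h (y i * u), ← hw, ← act_mul₂]
  have hsum : (∑ i : Fin m, P.act g (x i * P.e g⁻¹) * P.act h (y i * u * P.e h⁻¹)) * P.e g
      = P.act g ((∑ i : Fin m, x i * P.act w (y i * u * P.e h⁻¹)) * P.e g⁻¹) := by
    rw [Finset.sum_mul, Finset.sum_mul, act_sum]
    exact Finset.sum_congr rfl fun i _ => hterm i
  have hsum2 : (∑ i : Fin m, x i * P.act w (y i * u * P.e h⁻¹))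
      = (if w = 1 then 1 else 0) * B := by
    rw [← hxy w, Finset.sum_mul]
    refine Finset.sum_congr rfl fun i _ => ?_
    rw [hA i]; ring
  rw [hsum, hsum2]
  by_cases hcase : h = g
  · have hw1 : w = 1 := by rw [hw, hcase]; group
    rw [if_pos hcase, if_pos hw1, one_mul, hB, hw1]
    simp only [inv_one, P.e_one, P.act_one, mul_one, one_mul]
    rw [mul_assoc u (P.e g⁻¹) (P.e g⁻¹), P.e_idem]
  · have hw1 : ¬ (w = 1) := fun hcon => by
      rw [hw] at hcon
      exact hcase (inv_mul_eq_one.mp hcon).symm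
    rw [if_neg hcase, if_neg hw1, zero_mul, zero_mul, act_zero]

lemma key_identity (c : P.Cocycle) (u : S) :
    (∑ i : Fin m, tw c (x i) * tw (cocInv c) (y i * u)) = tr P u := by
  have expand : (∑ i : Fin m, tw c (x i) * tw (cocInv c) (y i * u))
      = ∑ g : G, ∑ h : G, ∑ i : Fin m,
          (c.finv g * P.act g (x i * P.e g⁻¹)) * (c.f h * P.act h (y i * u * P.e h⁻¹)) := by
    rw [show (∑ i : Fin m, tw c (x i) * tw (cocInv c) (y i * u))
        = ∑ i : Fin m, ∑ g : G, ∑ h : G,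
            (c.finv g * P.act g (x i * P.e g⁻¹)) * (c.f h * P.act h (y i * u * P.e h⁻¹)) from
      Finset.sum_congr rfl fun i _ => by rw [tw, tw, Finset.sum_mul_sum]; rfl]
    rw [Finset.sum_comm]
    exact Finset.sum_congr rfl fun g _ => Finset.sum_comm
  have inner : ∀ g h : G, (∑ i : Fin m,
        (c.finv g * P.act g (x i * P.e g⁻¹)) * (c.f h * P.act h (y i * u * P.e h⁻¹)))
      = c.finv g * c.f h * (if h = g then P.act g (u * P.e g⁻¹) else 0) := by
    intro g h
    rw [← inner_sum hxy g h u, Finset.sum_mul, Finset.mul_sum]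
    refine Finset.sum_congr rfl fun i _ => ?_
    conv_lhs => rw [← c.finv_mem g]
    ring
  have outer : ∀ g : G, (∑ h : G,
        c.finv g * c.f h * (if h = g then P.act g (u * P.e g⁻¹) else 0))
      = P.act g (u * P.e g⁻¹) := by
    intro g
    rw [show (∑ h : G, c.finv g * c.f h * (if h = g then P.act g (u * P.e g⁻¹) else 0))
        = ∑ h : G, (if h = g then c.finv g * c.f h * P.act g (u * P.e g⁻¹) else 0) from
      Finset.sum_congr rfl fun h _ => by by_cases hc : h = g <;> simp [hc]]
    rw [Finset.sum_ite_eq' Finset.univ g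
      (fun h => c.finv g * c.f h * P.act g (u * P.e g⁻¹))]
    simp only [Finset.mem_univ, if_pos]
    calc c.finv g * c.f g * P.act g (u * P.e g⁻¹)
        = (c.f g * c.finv g) * P.act g (u * P.e g⁻¹) := by ring
      _ = P.e g * P.act g (u * P.e g⁻¹) := by rw [c.f_mul_finv]
      _ = P.act g (u * P.e g⁻¹) * P.e g := by ring
      _ = P.act g (u * P.e g⁻¹) := P.act_mem g _
  rw [expand]
  calc (∑ g : G, ∑ h : G, ∑ i : Fin m,
          (c.finv g * P.act g (x i * P.e g⁻¹)) * (c.f h * P.act h (y i * u * P.e h⁻¹)))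
      = ∑ g : G, ∑ h : G,
          c.finv g * c.f h * (if h = g then P.act g (u * P.e g⁻¹) else 0) :=
        Finset.sum_congr rfl fun g _ => Finset.sum_congr rfl fun h _ => inner g h
    _ = ∑ g : G, P.act g (u * P.e g⁻¹) := Finset.sum_congr rfl fun g _ => outer g
    _ = tr P u := by rw [tr]

end Key

end PartialAction


set_option maxHeartbeats 1000000 in
set_option synthInstance.maxHeartbeats 400000 in
open PartialAction in
open TensorProduct in
/-- `ψ : Q_f ⊗_R Q_g → Q_{fg}`, `a ⊗ b ↦ ab`, is an `R`-module isomorphism. -/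
theorem Qmod_tensor_equiv {G : Type*} [CommGroup G] [Fintype G] [DecidableEq G]
    {S : Type*} [CommRing S] (P : PartialAction G S) (R : Subring S)
    (hR : ∀ r ∈ R, ∀ g : G, P.act g (r * P.e g⁻¹) = r * P.e g)
    (hGal : P.IsPartialGalois R)
    (c c' cc' : P.Cocycle) (hmul : ∀ g : G, cc'.f g = c.f g * c'.f g) :
    ∃ ψ : (PartialAction.Qmod P R hR c.f ⊗[R] PartialAction.Qmod P R hR c'.f) ≃ₗ[R]
        PartialAction.Qmod P R hR cc'.f,
      ∀ (a : PartialAction.Qmod P R hR c.f) (b : PartialAction.Qmod P R hR c'.f),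
        (ψ (a ⊗ₜ[R] b) : S) = (a : S) * (b : S) := by
  classical
  obtain ⟨hRinv, n, x, y, hxy⟩ := hGal
  obtain ⟨u, hu⟩ := exists_tr_one hxy R hR hRinv
  set a : Fin n → S := fun i => tw c (x i) with haDef
  set b : Fin n → S := fun i => tw (cocInv c) (y i * u) with hbDef
  have ha : ∀ i, a i ∈ Qset P c.f := fun i => tw_mem c (x i)
  have hb : ∀ i, b i ∈ Qset P c.finv := fun i => tw_mem (cocInv c) (y i * u)
  have hab : (∑ i : Fin n, a i * b i) = 1 := by
    rw [haDef, hbDef]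
    exact (key_identity hxy c u).trans hu
  -- membership facts
  have memQ : ∀ {f : G → S} {v : S}, v ∈ Qset P f → v ∈ Qmod P R hR f := fun hv => hv
  have memQ' : ∀ {f : G → S} (v : Qmod P R hR f), (v : S) ∈ Qset P f := fun v => v.2
  have hfg : ∀ (p : Qmod P R hR c.f) (q : Qmod P R hR c'.f),
      (p : S) * (q : S) ∈ Qmod P R hR cc'.f := by
    intro p q
    refine memQ ?_
    have h1 := Qset_mul (memQ' p) (memQ' q)
    have h2 : (fun h : G => c.f h * c'.f h) = cc'.f := funext fun h => (hmul h).symm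
    rwa [h2] at h1
  have hbz : ∀ (i : Fin n) (z : Qmod P R hR cc'.f),
      b i * (z : S) ∈ Qmod P R hR c'.f := by
    intro i z
    refine memQ ?_
    have h1 := Qset_mul (hb i) (memQ' z)
    have h2 : (fun h : G => c.finv h * cc'.f h) = c'.f := by
      funext h
      rw [hmul h]
      have h3 : c.finv h * (c.f h * c'.f h) = c'.f h * (c.f h * c.finv h) := by ring
      rw [h3, c.f_mul_finv, c'.f_mem]
    rwa [h2] at h1
  have memR : ∀ (i : Fin n) (p : Qmod P R hR c.f), b i * (p : S) ∈ R := by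
    intro i p
    have h1 := Qset_mul (hb i) (memQ' p)
    rw [← SetLike.mem_coe, hRinv]
    intro g
    rw [h1 g]
    calc c.finv g * c.f g * (b i * (p : S))
        = b i * (p : S) * (c.f g * c.finv g) := by ring
      _ = b i * (p : S) * P.e g := by rw [c.f_mul_finv]
  -- the multiplication map
  let bil : Qmod P R hR c.f →ₗ[R] Qmod P R hR c'.f →ₗ[R] Qmod P R hR cc'.f :=
    LinearMap.mk₂ R (fun p q => ⟨(p : S) * (q : S), hfg p q⟩)
      (fun p p' q => Subtype.ext (by simp only [Submodule.coe_add]; ring))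
      (fun r p q => Subtype.ext (by
        simp only [SetLike.val_smul, Subring.smul_def, smul_eq_mul]; ring))
      (fun p q q' => Subtype.ext (by simp only [Submodule.coe_add]; ring))
      (fun r p q => Subtype.ext (by
        simp only [SetLike.val_smul, Subring.smul_def, smul_eq_mul]; ring))
  let M : (Qmod P R hR c.f ⊗[R] Qmod P R hR c'.f) →ₗ[R] Qmod P R hR cc'.f :=
    TensorProduct.lift bil
  let aQ : Fin n → Qmod P R hR c.f := fun i => ⟨a i, ha i⟩
  let toQg : Fin n → (Qmod P R hR cc'.f →ₗ[R] Qmod P R hR c'.f) := fun i =>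
    { toFun := fun z => ⟨b i * (z : S), hbz i z⟩
      map_add' := fun z w => Subtype.ext (by simp only [Submodule.coe_add]; ring)
      map_smul' := fun r z => Subtype.ext (by
        simp only [RingHom.id_apply, SetLike.val_smul, Subring.smul_def, smul_eq_mul]; ring) }
  let N : Qmod P R hR cc'.f →ₗ[R] (Qmod P R hR c.f ⊗[R] Qmod P R hR c'.f) :=
    ∑ i : Fin n, (TensorProduct.mk R (Qmod P R hR c.f) (Qmod P R hR c'.f) (aQ i)).comp (toQg i)
  have hNapp : ∀ z : Qmod P R hR cc'.f,
      N z = ∑ i : Fin n, (aQ i) ⊗ₜ[R] (⟨b i * (z : S), hbz i z⟩ : Qmod P R hR c'.f) := by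
    intro z
    rw [show N z = ∑ i : Fin n,
        ((TensorProduct.mk R (Qmod P R hR c.f) (Qmod P R hR c'.f) (aQ i)).comp (toQg i)) z from
      LinearMap.sum_apply _ _ z]
    rfl
  have hMN : M.comp N = LinearMap.id := by
    apply LinearMap.ext
    intro z
    rw [LinearMap.comp_apply, LinearMap.id_apply, hNapp z, map_sum]
    apply Subtype.ext
    rw [AddSubmonoidClass.coe_finset_sum]
    have hterm : ∀ i : Fin n,
        ((M ((aQ i) ⊗ₜ[R] (⟨b i * (z : S), hbz i z⟩ : Qmod P R hR c'.f))) : S)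
          = a i * b i * (z : S) := by
      intro i
      show ((bil (aQ i) ⟨b i * (z : S), hbz i z⟩ : Qmod P R hR cc'.f) : S) = a i * b i * (z : S)
      show a i * (b i * (z : S)) = a i * b i * (z : S)
      ring
    rw [Finset.sum_congr rfl fun i _ => hterm i, ← Finset.sum_mul, hab, one_mul]
  have hNM : N.comp M = LinearMap.id := by
    apply TensorProduct.ext'
    intro p q
    rw [LinearMap.comp_apply, LinearMap.id_apply]
    set z : Qmod P R hR cc'.f := ⟨(p : S) * (q : S), hfg p q⟩ with hz
    have hM : M (p ⊗ₜ[R] q) = z := rfl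
    rw [hM, hNapp]
    have hterm : ∀ i : Fin n,
        (aQ i) ⊗ₜ[R] (⟨b i * (z : S), hbz i z⟩ : Qmod P R hR c'.f)
          = ((⟨b i * (p : S), memR i p⟩ : R) • aQ i) ⊗ₜ[R] q := by
      intro i
      have h1 : (⟨b i * (z : S), hbz i z⟩ : Qmod P R hR c'.f)
          = (⟨b i * (p : S), memR i p⟩ : R) • q := by
        apply Subtype.ext
        simp only [SetLike.val_smul, Subring.smul_def, smul_eq_mul]
        show b i * ((p : S) * (q : S)) = b i * (p : S) * (q : S)
        ring
      rw [h1, TensorProduct.tmul_smul, TensorProduct.smul_tmul']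
    rw [Finset.sum_congr rfl fun i _ => hterm i, ← TensorProduct.sum_tmul]
    congr 1
    apply Subtype.ext
    rw [AddSubmonoidClass.coe_finset_sum]
    have hterm2 : ∀ i : Fin n,
        (((⟨b i * (p : S), memR i p⟩ : R) • aQ i : Qmod P R hR c.f) : S)
          = a i * b i * (p : S) := by
      intro i
      simp only [SetLike.val_smul, Subring.smul_def, smul_eq_mul]
      show (b i * (p : S)) * a i = a i * b i * (p : S)
      ring
    rw [Finset.sum_congr rfl fun i _ => hterm2 i, ← Finset.sum_mul, hab, one_mul]
  refine ⟨LinearEquiv.ofLinear M N hMN hNM, fun p q => ?_⟩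
  rfl
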